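/- Gallai-Edmonds matching structure: for any maximum matching M of a bipartite graph G1, every odd vertex is matched by M to an even vertex, every unreachable vertex is matched by M to another unreachable vertex, and the size of M equals |O| + |U|/2, where O and U are the sets of odd and unreachable vertices. -/

import Mathlib

universe u v

/-- A matching assigns to each person at most one item, injectively on items. -/
def IsMatching {α β : Type*} (M : α → Option β) : Prop :=
  ∀ a a' b, M a = some b → M a' = some b → a = a'

/-- A matching using only edges of the bipartite graph `E`. -/
def IsMatchingOn {α β : Type*} (E : α → β → Prop) (M : α → Option β) : Prop :=
  (∀ a b, M a = some b → E a b) ∧ IsMatching M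

/-- Number of matched people (= number of edges of the matching). -/
noncomputable def msize {α β : Type*} [Fintype α] (M : α → Option β) : ℕ :=
  Nat.card {a // (M a).isSome}

/-- A maximum cardinality matching of the bipartite graph `E`. -/
def IsMaxMatchingOn {α β : Type*} [Fintype α] (E : α → β → Prop) (M : α → Option β) : Prop :=
  IsMatchingOn E M ∧ ∀ M', IsMatchingOn E M' → msize M' ≤ msize M

mutual
  /-- A person reachable from an `M`-unmatched vertex by an even-length alternating path
  (such paths start at an unmatched person). -/
  inductive EvenA {α : Type u} {β : Type v} (E : α → β → Prop) (M : α → Option β) : α → Prop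
    | base (a : α) : M a = none → EvenA E M a
    | step (a : α) (b : β) : OddB E M b → M a = some b → EvenA E M a
  /-- An item reachable from an `M`-unmatched vertex by an odd-length alternating path. -/
  inductive OddB {α : Type u} {β : Type v} (E : α → β → Prop) (M : α → Option β) : β → Prop
    | step (a : α) (b : β) : EvenA E M a → E a b → M a ≠ some b → OddB E M b
end

mutual
  /-- An item reachable from an `M`-unmatched vertex by an even-length alternating path
  (such paths start at an unmatched item). -/
  inductive EvenB {α : Type u} {β : Type v} (E : α → β → Prop) (M : α → Option β) : β → Prop
    | base (b : β) : (∀ a, M a ≠ some b) → EvenB E M b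
    | step (a : α) (b : β) : OddA E M a → M a = some b → EvenB E M b
  /-- A person reachable from an `M`-unmatched vertex by an odd-length alternating path. -/
  inductive OddA {α : Type u} {β : Type v} (E : α → β → Prop) (M : α → Option β) : α → Prop
    | step (a : α) (b : β) : EvenB E M b → E a b → M a ≠ some b → OddA E M a
end

/-- An unreachable person: no alternating path from an unmatched vertex reaches it. -/
def UnreachA {α β : Type*} (E : α → β → Prop) (M : α → Option β) (a : α) : Prop :=
  ¬ EvenA E M a ∧ ¬ OddA E M a

/-- An unreachable item: no alternating path from an unmatched vertex reaches it. -/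
def UnreachB {α β : Type*} (E : α → β → Prop) (M : α → Option β) (b : β) : Prop :=
  ¬ EvenB E M b ∧ ¬ OddB E M b

namespace GallaiAux

variable {α : Type u} {β : Type v}

/-! ### Alternating chains -/

inductive Chain (E : α → β → Prop) (M : α → Option β) : List α → Prop
  | base (a : α) : M a = none → Chain E M [a]
  | cons (a a' : α) (b : β) (l : List α) :
      Chain E M (a' :: l) → M a = some b → E a' b → M a' ≠ some b →
      Chain E M (a :: a' :: l)

lemma chain_suffix {E : α → β → Prop} {M : α → Option β} :
    ∀ {l}, Chain E M l → ∀ l₁ l₂, l = l₁ ++ l₂ → l₂ ≠ [] → Chain E M l₂ := by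
  intro l h
  induction h with
  | base a ha =>
    intro l₁ l₂ he hne
    cases l₁ with
    | nil => simp at he; subst he; exact Chain.base a ha
    | cons x t => simp at he; exact absurd he.2.2 hne
  | cons a a' b l hch hab hE hne ih =>
    intro l₁ l₂ he hne2
    cases l₁ with
    | nil => simp at he; subst he; exact Chain.cons a a' b l hch hab hE hne
    | cons x t => simp at he; exact ih t l₂ he.2 hne2

lemma sublist_pair {x : α} : ∀ {m : List α}, List.Sublist [x, x] m →
    ∃ t₁ t₂ t₃, m = t₁ ++ x :: t₂ ++ x :: t₃ := by
  intro m h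
  induction m with
  | nil => simp at h
  | cons y m ih =>
    cases h with
    | cons _ h' =>
      obtain ⟨t₁, t₂, t₃, rfl⟩ := ih h'
      exact ⟨y :: t₁, t₂, t₃, rfl⟩
    | cons_cons _ h' =>
      have hx : x ∈ m := h'.subset (by simp)
      obtain ⟨s, t, rfl⟩ := List.append_of_mem hx
      exact ⟨[], s, t, by simp⟩

lemma chain_cut {E : α → β → Prop} {M : α → Option β} :
    ∀ (l₁ : List α) (x : α) (l₂ l₃ : List α),
      Chain E M (l₁ ++ x :: l₂ ++ x :: l₃) → Chain E M (l₁ ++ x :: l₃) := by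
  intro l₁
  induction l₁ with
  | nil =>
    intro x l₂ l₃ h
    exact chain_suffix h (x :: l₂) (x :: l₃) (by simp) (by simp)
  | cons a t ih =>
    intro x l₂ l₃ h
    cases t with
    | nil =>
      cases h with
      | cons _ _ b _ hch hab hE hne =>
        have h3 : Chain E M (x :: l₃) :=
          chain_suffix hch (x :: l₂) (x :: l₃) (by simp) (by simp)
        exact Chain.cons a x b l₃ h3 hab hE hne
    | cons a' t' =>
      cases h with
      | cons _ _ b _ hch hab hE hne =>
        exact Chain.cons a a' b _ (ih x l₂ l₃ hch) hab hE hne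

lemma chain_nodup {E : α → β → Prop} {M : α → Option β} :
    ∀ (n : ℕ) (a : α) (l : List α), l.length ≤ n → Chain E M (a :: l) →
      ∃ l', Chain E M (a :: l') ∧ (a :: l').Nodup := by
  intro n
  induction n with
  | zero =>
    intro a l hl hch
    have : l = [] := List.eq_nil_of_length_eq_zero (Nat.le_zero.mp hl)
    subst this
    exact ⟨[], hch, by simp⟩
  | succ n ih =>
    intro a l hl hch
    by_cases hnd : (a :: l).Nodup
    · exact ⟨l, hch, hnd⟩
    · obtain ⟨x, hx⟩ := List.exists_duplicate_iff_not_nodup.mpr hnd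
      obtain ⟨t₁, t₂, t₃, he⟩ := sublist_pair (List.duplicate_iff_sublist.mp hx)
      cases t₁ with
      | nil =>
        simp at he
        obtain ⟨rfl, rfl⟩ := he
        have hcut : Chain E M (a :: t₃) := chain_cut [] a t₂ t₃ (by simpa using hch)
        have hlen : t₃.length ≤ n := by
          have := hl
          simp [List.length_append] at this
          omega
        exact ih a t₃ hlen hcut
      | cons c t₁' =>
        obtain ⟨rfl, he'⟩ := List.cons_eq_cons.mp (by simpa using he)
        subst he'
        have hcut : Chain E M (a :: (t₁' ++ x :: t₃)) := by
          simpa using chain_cut (a :: t₁') x t₂ t₃ (by simpa using hch)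
        have hlen : (t₁' ++ x :: t₃).length ≤ n := by
          simp [List.length_append] at hl ⊢
          omega
        exact ih a (t₁' ++ x :: t₃) hlen hcut

lemma evenA_chain {E : α → β → Prop} {M : α → Option β} {a : α} (h : EvenA E M a) :
    ∃ l, Chain E M (a :: l) := by
  refine EvenA.rec (motive_1 := fun a _ => ∃ l, Chain E M (a :: l))
    (motive_2 := fun b _ => ∃ a' l, Chain E M (a' :: l) ∧ E a' b ∧ M a' ≠ some b)
    ?_ ?_ ?_ h
  · intro a ha; exact ⟨[], Chain.base a ha⟩
  · rintro a b hOdd hab ⟨a', l, hch, hE, hne⟩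
    exact ⟨a' :: l, Chain.cons a a' b l hch hab hE hne⟩
  · rintro a b hEv hE hne ⟨l, hch⟩
    exact ⟨a, l, hch, hE, hne⟩

/-! ### Flipping a simple chain frees its endpoint -/

lemma flip {E : α → β → Prop} {M : α → Option β} (hm : IsMatchingOn E M) :
    ∀ {l}, Chain E M l → l.Nodup →
    ∀ a l', l = a :: l' →
    ∃ M' : α → Option β, IsMatchingOn E M' ∧ M' a = none ∧
      (∀ c, (∃ x, M x = some c) ↔ (∃ x, M' x = some c)) ∧
      (∀ x, x ∉ l → M' x = M x) ∧
      (∀ y c, M' y = some c → M y = some c ∨ ∃ z ∈ l, M z = some c) := by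
  intro l hch
  induction hch with
  | base a0 h0 =>
    intro _ a l' he
    obtain ⟨rfl, rfl⟩ := List.cons_eq_cons.mp he
    exact ⟨M, hm, h0, fun c => Iff.rfl, fun x _ => rfl, fun y c hy => Or.inl hy⟩
  | cons a a' b l hch hab hE hne ih =>
    intro hnd a₀ l₀ he
    obtain ⟨rfl, rfl⟩ := List.cons_eq_cons.mp he
    classical
    have hnd' : (a' :: l).Nodup := hnd.of_cons
    have hamem : a ∉ a' :: l := (List.nodup_cons.mp hnd).1
    obtain ⟨M₁, hm₁, h₁a', items₁, off₁, inv₁⟩ := ih hnd' a' l rfl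
    have hM₁a : M₁ a = some b := by rw [off₁ a hamem]; exact hab
    have hane : a ≠ a' := fun h => hamem (h ▸ List.mem_cons_self (a := a') (l := l))
    have key : ∀ y, M₁ y = some b → y = a := by
      intro y hy
      rcases inv₁ y b hy with h | ⟨z, hz, hzb⟩
      · exact hm.2 y a b h hab
      · have hza : z = a := hm.2 z a b hzb hab
        exact absurd (hza ▸ hz) hamem
    refine ⟨fun x => if x = a then none else if x = a' then some b else M₁ x,
      ⟨?_, ?_⟩, by simp, ?_, ?_, ?_⟩
    · intro x c hx
      by_cases hxa : x = a
      · simp [hxa] at hx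
      · by_cases hxa' : x = a'
        · simp only [if_neg hxa, if_pos hxa'] at hx
          obtain rfl : b = c := Option.some.inj hx
          exact hxa' ▸ hE
        · simp only [if_neg hxa, if_neg hxa'] at hx
          exact hm₁.1 x c hx
    · intro y y' c hy hy'
      by_cases hya : y = a
      · simp [hya] at hy
      by_cases h'ya : y' = a
      · simp [h'ya] at hy'
      by_cases hya' : y = a'
      · by_cases h'ya' : y' = a'
        · rw [hya', h'ya']
        · simp only [if_neg hya, if_pos hya'] at hy
          simp only [if_neg h'ya, if_neg h'ya'] at hy'
          obtain rfl : b = c := Option.some.inj hy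
          exact absurd (key y' hy') h'ya
      · by_cases h'ya' : y' = a'
        · simp only [if_neg hya, if_neg hya'] at hy
          simp only [if_neg h'ya, if_pos h'ya'] at hy'
          obtain rfl : b = c := Option.some.inj hy'
          exact absurd (key y hy) hya
        · simp only [if_neg hya, if_neg hya'] at hy
          simp only [if_neg h'ya, if_neg h'ya'] at hy'
          exact hm₁.2 y y' c hy hy'
    · intro c
      rw [items₁ c]
      constructor
      · rintro ⟨x, hx⟩
        by_cases hxa : x = a
        · subst hxa
          obtain rfl : b = c := Option.some.inj (hM₁a ▸ hx)
          refine ⟨a', ?_⟩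
          simp [Ne.symm hane]
        · by_cases hxa' : x = a'
          · subst hxa'
            rw [h₁a'] at hx
            exact absurd hx (by simp)
          · refine ⟨x, ?_⟩
            simp only [if_neg hxa, if_neg hxa']
            exact hx
      · rintro ⟨x, hx⟩
        by_cases hxa : x = a
        · simp [hxa] at hx
        by_cases hxa' : x = a'
        · simp only [if_neg hxa, if_pos hxa'] at hx
          obtain rfl : b = c := Option.some.inj hx
          exact ⟨a, hM₁a⟩
        · simp only [if_neg hxa, if_neg hxa'] at hx
          exact ⟨x, hx⟩
    · intro x hx
      have h1 : x ≠ a := fun h => hx (h ▸ List.mem_cons_self (a := a) (l := a' :: l))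
      have h2 : x ∉ a' :: l := fun h => hx (List.mem_cons_of_mem _ h)
      have h3 : x ≠ a' := fun h => h2 (h ▸ List.mem_cons_self (a := a') (l := l))
      simp only [if_neg h1, if_neg h3]
      exact off₁ x h2
    · intro y c hy
      by_cases hya : y = a
      · simp [hya] at hy
      by_cases hya' : y = a'
      · simp only [if_neg hya, if_pos hya'] at hy
        obtain rfl : b = c := Option.some.inj hy
        exact Or.inr ⟨a, List.mem_cons_self, hab⟩
      · simp only [if_neg hya, if_neg hya'] at hy
        rcases inv₁ y c hy with h | ⟨z, hz, hzb⟩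
        · exact Or.inl h
        · exact Or.inr ⟨z, List.mem_cons_of_mem _ hz, hzb⟩

lemma free_even {E : α → β → Prop} {M : α → Option β} (hm : IsMatchingOn E M) {a : α}
    (h : EvenA E M a) :
    ∃ M', IsMatchingOn E M' ∧ M' a = none ∧
      ∀ c, (∃ x, M x = some c) ↔ (∃ x, M' x = some c) := by
  obtain ⟨l, hch⟩ := evenA_chain h
  obtain ⟨l', hch', hnd⟩ := chain_nodup l.length a l le_rfl hch
  obtain ⟨M', h1, h2, h3, -, -⟩ := flip hm hch' hnd a l' rfl
  exact ⟨M', h1, h2, h3⟩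

/-! ### Cardinality helpers -/

lemma card_set_eq {p : α → Prop} : Nat.card {a // p a} = Set.ncard {a | p a} :=
  Nat.card_coe_set_eq _

lemma card_or [Fintype α] {p q : α → Prop} (h : ∀ a, p a → q a → False) :
    Nat.card {a // p a ∨ q a} = Nat.card {a // p a} + Nat.card {a // q a} := by
  rw [card_set_eq, card_set_eq, card_set_eq]
  have hu : {a | p a ∨ q a} = {a | p a} ∪ {a | q a} := by
    ext a; simp [Set.mem_union]
  rw [hu]
  exact Set.ncard_union_eq (Set.disjoint_left.mpr fun {a} hp hq => h a hp hq)
    (Set.toFinite _) (Set.toFinite _)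

lemma msize_eq_card_items [Fintype α] {M : α → Option β} (hm : IsMatching M) :
    msize M = Nat.card {b // ∃ a, M a = some b} := by
  refine Nat.card_eq_of_bijective
    (fun x => ⟨(M x.1).get x.2, x.1, (Option.some_get x.2).symm⟩) ⟨?_, ?_⟩
  · rintro ⟨x, hx⟩ ⟨y, hy⟩ hxy
    have h1 : M x = some ((M x).get hx) := (Option.some_get hx).symm
    have h2 : M y = some ((M y).get hy) := (Option.some_get hy).symm
    have h3 : (M x).get hx = (M y).get hy := congrArg Subtype.val hxy
    exact Subtype.ext (hm x y _ h1 (h3 ▸ h2))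
  · rintro ⟨b, a, ha⟩
    refine ⟨⟨a, by rw [ha]; rfl⟩, ?_⟩
    apply Subtype.ext
    simp [ha]

lemma msize_insert [Fintype α] {M' M₂ : α → Option β} {a : α} {b : β} (h : M' a = none)
    (h2 : M₂ a = some b) (h3 : ∀ x, x ≠ a → M₂ x = M' x) :
    msize M₂ = msize M' + 1 := by
  classical
  have hset : {x | (M₂ x).isSome} = insert a {x | (M' x).isSome} := by
    ext x
    by_cases hx : x = a
    · subst hx; simp [h2]
    · simp [h3 x hx, hx]
  rw [msize, msize, card_set_eq, card_set_eq, hset,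
    Set.ncard_insert_of_notMem (by simp [h]) (Set.toFinite _)]

/-! ### No augmenting path for a maximum matching -/

lemma aug_free [Fintype α] {E : α → β → Prop} {M : α → Option β}
    (hM : IsMaxMatchingOn E M) :
    ∀ {b}, EvenB E M b → ∀ a, E a b → M a ≠ some b → EvenA E M a → False := by
  intro b hb
  refine EvenB.rec (motive_1 := fun b _ => ∀ a, E a b → M a ≠ some b → EvenA E M a → False)
    (motive_2 := fun a' _ => ∀ b₂, M a' = some b₂ →
      ∀ a, E a b₂ → M a ≠ some b₂ → EvenA E M a → False) ?_ ?_ ?_ hb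
  · -- base : b is unmatched, giving an augmenting path
    intro b hfree a hE hne hEv
    obtain ⟨M', hm', ha', hitems⟩ := free_even hM.1 hEv
    classical
    have hnb : ∀ x, M' x ≠ some b := by
      intro x hx
      obtain ⟨y, hy⟩ := (hitems b).mpr ⟨x, hx⟩
      exact hfree y hy
    have hmm2 : IsMatchingOn E (fun x => if x = a then some b else M' x) := by
      constructor
      · intro x c hx
        by_cases hxa : x = a
        · simp only [if_pos hxa] at hx
          obtain rfl : b = c := Option.some.inj hx
          exact hxa ▸ hE
        · simp only [if_neg hxa] at hx
          exact hm'.1 x c hx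
      · intro y y' c hy hy'
        by_cases hya : y = a
        · by_cases h'ya : y' = a
          · rw [hya, h'ya]
          · simp only [if_pos hya] at hy
            simp only [if_neg h'ya] at hy'
            obtain rfl : b = c := Option.some.inj hy
            exact absurd hy' (hnb y')
        · by_cases h'ya : y' = a
          · simp only [if_neg hya] at hy
            simp only [if_pos h'ya] at hy'
            obtain rfl : b = c := Option.some.inj hy'
            exact absurd hy (hnb y)
          · simp only [if_neg hya] at hy
            simp only [if_neg h'ya] at hy'
            exact hm'.2 y y' c hy hy'
    have hs1 : msize M' = msize M := by
      rw [msize_eq_card_items hm'.2, msize_eq_card_items hM.1.2]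
      exact (Nat.card_congr (Equiv.subtypeEquivRight fun c => hitems c)).symm
    have hs2 : msize (fun x => if x = a then some b else M' x) = msize M' + 1 :=
      msize_insert (b := b) ha' (by simp) (fun x hx => by simp [hx])
    have := hM.2 _ hmm2
    omega
  · -- EvenB.step
    intro a' b hOddA hab ih
    exact ih b hab
  · -- OddA.step
    intro a₃ b₃ hEvB₃ hE₃ hne₃ ih
    intro b₂ hab₂ a hE hne hEv
    exact ih a₃ hE₃ hne₃ (EvenA.step a₃ b₂ (OddB.step a b₂ hEv hE hne) hab₂)

lemma oddA_matched [Fintype α] {E : α → β → Prop} {M : α → Option β}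
    (hM : IsMaxMatchingOn E M) {a : α} (h : OddA E M a) : (M a).isSome := by
  cases h with
  | step a b₂ hEvB hE hne =>
    cases hMa : M a with
    | some b => rfl
    | none => exact (aug_free hM hEvB a hE hne (EvenA.base a hMa)).elim

lemma oddB_matched [Fintype α] {E : α → β → Prop} {M : α → Option β}
    (hM : IsMaxMatchingOn E M) {b : β} (h : OddB E M b) : ∃ a, M a = some b := by
  by_contra hc
  push_neg at hc
  cases h with
  | step a b hEv hE hne => exact aug_free hM (EvenB.base b hc) a hE hne hEv

lemma not_evenA_oddA [Fintype α] {E : α → β → Prop} {M : α → Option β}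
    (hM : IsMaxMatchingOn E M) {a : α} (h1 : EvenA E M a) (h2 : OddA E M a) : False := by
  cases h2 with
  | step a b₂ hEvB hE hne => exact aug_free hM hEvB a hE hne h1

lemma not_evenB_oddB [Fintype α] {E : α → β → Prop} {M : α → Option β}
    (hM : IsMaxMatchingOn E M) {b : β} (h1 : EvenB E M b) (h2 : OddB E M b) : False := by
  cases h2 with
  | step a b hEv hE hne => exact aug_free hM h1 a hE hne hEv

end GallaiAux

open GallaiAux

/-- Gallai–Edmonds matching structure: in any maximum matching, every odd vertex is
matched to an even vertex, every unreachable vertex is matched to an unreachable vertex,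
and the size of the matching is |O| + |U|/2 (stated doubled to avoid division). -/
theorem gallai_edmonds_structure {α β : Type*} [Fintype α] [Fintype β]
    (E : α → β → Prop) (M : α → Option β) (hM : IsMaxMatchingOn E M) :
    (∀ a, OddA E M a → ∃ b, M a = some b ∧ EvenB E M b) ∧
    (∀ b, OddB E M b → ∃ a, M a = some b ∧ EvenA E M a) ∧
    (∀ a, UnreachA E M a → ∃ b, M a = some b ∧ UnreachB E M b) ∧
    (∀ b, UnreachB E M b → ∃ a, M a = some b ∧ UnreachA E M a) ∧
    2 * msize M =
      2 * (Nat.card {a // OddA E M a} + Nat.card {b // OddB E M b}) +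
        (Nat.card {a // UnreachA E M a} + Nat.card {b // UnreachB E M b}) := by
  classical
  have hinj : IsMatching M := hM.1.2
  have FA : ∀ a : α, OddA E M a → (M a).isSome := fun a h => oddA_matched hM h
  have FB : ∀ b : β, OddB E M b → ∃ a, M a = some b := fun b h => oddB_matched hM h
  have HUA : ∀ a : α, UnreachA E M a → (M a).isSome := by
    intro a ha
    cases hMa : M a with
    | some b => rfl
    | none => exact (ha.1 (EvenA.base a hMa)).elim
  have HUB : ∀ b : β, UnreachB E M b → ∃ x, M x = some b := by
    intro b hb
    by_contra hc
    push_neg at hc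
    exact (hb.1 (EvenB.base b hc)).elim
  refine ⟨?_, ?_, ?_, ?_, ?_⟩
  · -- odd persons are matched to even items
    intro a h
    cases hMa : M a with
    | none => have := FA a h; rw [hMa] at this; exact absurd this (by simp)
    | some b => exact ⟨b, rfl, EvenB.step a b h hMa⟩
  · -- odd items are matched to even persons
    intro b h
    obtain ⟨a, ha⟩ := FB b h
    exact ⟨a, ha, EvenA.step a b h ha⟩
  · -- unreachable persons are matched to unreachable items
    intro a ha
    cases hMa : M a with
    | none => exact (ha.1 (EvenA.base a hMa)).elim
    | some b =>
      refine ⟨b, rfl, ?_, ?_⟩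
      · intro hEvB
        cases hEvB with
        | base _ h0 => exact h0 a hMa
        | step a' _ hO' ha' =>
          have haa : a' = a := hinj a' a b ha' hMa
          exact ha.2 (haa ▸ hO')
      · intro hOb
        exact ha.1 (EvenA.step a b hOb hMa)
  · -- unreachable items are matched to unreachable persons
    intro b hb
    by_cases hmb : ∃ a, M a = some b
    · obtain ⟨a, ha⟩ := hmb
      refine ⟨a, ha, ?_, ?_⟩
      · intro hEv
        cases hEv with
        | base _ h0 => rw [h0] at ha; exact absurd ha (by simp)
        | step _ b' hOb hab =>
          obtain rfl : b' = b := Option.some.inj (hab.symm.trans ha)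
          exact hb.2 hOb
      · intro hOa
        exact hb.1 (EvenB.step a b hOa ha)
    · push_neg at hmb
      exact (hb.1 (EvenB.base b hmb)).elim
  · -- the counting identity
    have hP : msize M = Nat.card {b // OddB E M b} +
        (Nat.card {a // OddA E M a} + Nat.card {a // UnreachA E M a}) := by
      have e1 : msize M = Nat.card {a // ((M a).isSome ∧ EvenA E M a) ∨
          (OddA E M a ∨ UnreachA E M a)} := by
        refine Nat.card_congr (Equiv.subtypeEquivRight fun a => ?_)
        constructor
        · intro h
          by_cases hE : EvenA E M a
          · exact Or.inl ⟨h, hE⟩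
          by_cases hO : OddA E M a
          · exact Or.inr (Or.inl hO)
          · exact Or.inr (Or.inr ⟨hE, hO⟩)
        · rintro (⟨h, -⟩ | h | h)
          · exact h
          · exact FA a h
          · exact HUA a h
      have e2 : Nat.card {a // (M a).isSome ∧ EvenA E M a} = Nat.card {b // OddB E M b} := by
        refine Nat.card_eq_of_bijective (fun x => ⟨(M x.1).get x.2.1, ?_⟩) ⟨?_, ?_⟩
        · obtain ⟨a, hs, hEv⟩ := x
          cases hEv with
          | base _ h0 => rw [h0] at hs; exact absurd hs (by simp)
          | step _ b' hOdd hab =>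
            have hg : M a = some ((M a).get hs) := (Option.some_get hs).symm
            obtain rfl : b' = (M a).get hs := Option.some.inj (hab.symm.trans hg)
            exact hOdd
        · rintro ⟨x, hx, hex⟩ ⟨y, hy, hey⟩ hxy
          have h1 : M x = some ((M x).get hx) := (Option.some_get hx).symm
          have h2 : M y = some ((M y).get hy) := (Option.some_get hy).symm
          have h3 : (M x).get hx = (M y).get hy := congrArg Subtype.val hxy
          exact Subtype.ext (hinj x y _ h1 (h3 ▸ h2))
        · rintro ⟨b, hOdd⟩
          obtain ⟨a, ha⟩ := FB b hOdd
          refine ⟨⟨a, by rw [ha]; rfl, EvenA.step a b hOdd ha⟩, ?_⟩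
          apply Subtype.ext
          simp [ha]
      have e3 := card_or (p := fun a => (M a).isSome ∧ EvenA E M a)
        (q := fun a => OddA E M a ∨ UnreachA E M a) (by
          rintro a ⟨-, hEv⟩ (hO | hU)
          · exact not_evenA_oddA hM hEv hO
          · exact hU.1 hEv)
      have e4 := card_or (p := fun a => OddA E M a) (q := fun a => UnreachA E M a)
        (fun a hO hU => hU.2 hO)
      rw [e1, e3, e4, e2]
    have hI : msize M = Nat.card {a // OddA E M a} +
        (Nat.card {b // OddB E M b} + Nat.card {b // UnreachB E M b}) := by
      have e0 : msize M = Nat.card {b // ∃ x, M x = some b} := msize_eq_card_items hinj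
      have e1 : Nat.card {b // ∃ x, M x = some b} =
          Nat.card {b // ((∃ x, M x = some b) ∧ EvenB E M b) ∨
            (OddB E M b ∨ UnreachB E M b)} := by
        refine Nat.card_congr (Equiv.subtypeEquivRight fun b => ?_)
        constructor
        · intro h
          by_cases hE : EvenB E M b
          · exact Or.inl ⟨h, hE⟩
          by_cases hO : OddB E M b
          · exact Or.inr (Or.inl hO)
          · exact Or.inr (Or.inr ⟨hE, hO⟩)
        · rintro (⟨h, -⟩ | h | h)
          · exact h
          · exact FB b h
          · exact HUB b h
      have e2 : Nat.card {a // OddA E M a} =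
          Nat.card {b // (∃ x, M x = some b) ∧ EvenB E M b} := by
        refine Nat.card_eq_of_bijective
          (fun x => ⟨(M x.1).get (FA x.1 x.2), ⟨x.1, (Option.some_get _).symm⟩, ?_⟩) ⟨?_, ?_⟩
        · exact EvenB.step x.1 _ x.2 (Option.some_get _).symm
        · rintro ⟨x, hx⟩ ⟨y, hy⟩ hxy
          have h1 : M x = some ((M x).get (FA x hx)) := (Option.some_get _).symm
          have h2 : M y = some ((M y).get (FA y hy)) := (Option.some_get _).symm
          have h3 : (M x).get (FA x hx) = (M y).get (FA y hy) := congrArg Subtype.val hxy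
          exact Subtype.ext (hinj x y _ h1 (h3 ▸ h2))
        · rintro ⟨b, ⟨x0, hx0⟩, hEvB⟩
          cases hEvB with
          | base _ h0 => exact absurd hx0 (h0 x0)
          | step a' _ hO' ha' =>
            refine ⟨⟨a', hO'⟩, Subtype.ext ?_⟩
            simp [ha']
      have e3 := card_or (p := fun b => (∃ x, M x = some b) ∧ EvenB E M b)
        (q := fun b => OddB E M b ∨ UnreachB E M b) (by
          rintro b ⟨-, hEv⟩ (hO | hU)
          · exact not_evenB_oddB hM hEv hO
          · exact hU.1 hEv)
      have e4 := card_or (p := fun b => OddB E M b) (q := fun b => UnreachB E M b)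
        (fun b hO hU => hU.2 hO)
      rw [e0, e1, e3, e4, ← e2]
    omega
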